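/- Let f : ℝ^d → ℝ be twice continuously differentiable with ∇²f(x) positive definite for all x, attain its minimum value f⋆ at some point x⋆, and be μ̂-relatively convex with μ̂ > 0: f(x) − f(y) − ∇f(y)ᵀ(x−y) ≥ (μ̂/2)(x−y)ᵀ∇²f(y)(x−y) for all x, y. Then for every x ∈ ℝ^d: ∇f(x)ᵀ(∇²f(x))⁻¹∇f(x) ≥ 2μ̂·(f(x) − f⋆). -/

import Mathlib

open scoped RealInnerProductSpace

/-- (Relative Polyak–Łojasiewicz inequality.)  Let `f : ℝ^d → ℝ` be twice
continuously differentiable with (invertible) positive definite Hessian `Hf x` at every point,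
attain its minimum value `f⋆` at some point `x⋆`, and be `μ̂`-relatively convex (`μ̂ > 0`):
`f(x) − f(y) − ∇f(y)ᵀ(x−y) ≥ (μ̂/2)(x−y)ᵀ∇²f(y)(x−y)` for all `x, y`.  Then for every `x`,
`∇f(x)ᵀ(∇²f(x))⁻¹∇f(x) ≥ 2μ̂·(f(x) − f⋆)`. -/
theorem relative_PL_inequality (d : ℕ)
    (f : EuclideanSpace ℝ (Fin d) → ℝ) (hf : ContDiff ℝ 2 f)
    (Hf : EuclideanSpace ℝ (Fin d) → (EuclideanSpace ℝ (Fin d) ≃L[ℝ] EuclideanSpace ℝ (Fin d)))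
    (hHf : ∀ x u v : EuclideanSpace ℝ (Fin d), ⟪Hf x u, v⟫ = iteratedFDeriv ℝ 2 f x ![u, v])
    (hpd : ∀ (x u : EuclideanSpace ℝ (Fin d)), u ≠ 0 → 0 < ⟪Hf x u, u⟫)
    (fstar : ℝ) (xstar : EuclideanSpace ℝ (Fin d)) (hxstar : f xstar = fstar)
    (hmin : ∀ x, fstar ≤ f x)
    (μhat : ℝ) (hμhat : 0 < μhat)
    (hrel : ∀ x y : EuclideanSpace ℝ (Fin d),
      μhat / 2 * ⟪Hf y (x - y), x - y⟫ ≤ f x - f y - ⟪gradient f y, x - y⟫) :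
    ∀ x : EuclideanSpace ℝ (Fin d),
      2 * μhat * (f x - fstar) ≤ ⟪(Hf x).symm (gradient f x), gradient f x⟫ := by
  intro x
  set g := gradient f x with hg
  set u := (Hf x).symm g with hu
  set S := ⟪u, g⟫ with hS
  set w := xstar - x with hw
  set w0 := (-(μhat⁻¹)) • u with hw0
  clear_value w w0
  have Hsymm : ∀ a b : EuclideanSpace ℝ (Fin d), ⟪Hf x a, b⟫ = ⟪Hf x b, a⟫ := by
    intro a b
    have hsy := (hf.contDiffAt (x := x)).isSymmSndFDerivAt minSmoothness_of_isRCLikeNormedField.le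
    rw [hHf, hHf, iteratedFDeriv_two_apply, iteratedFDeriv_two_apply]
    simpa using hsy a b
  have hnn : ∀ a : EuclideanSpace ℝ (Fin d), 0 ≤ ⟪Hf x a, a⟫ := by
    intro a
    rcases eq_or_ne a 0 with rfl | ha
    · simp
    · exact (hpd x a ha).le
  have hHw0 : Hf x w0 = (-(μhat⁻¹)) • g := by
    rw [hw0, map_smul, hu, ContinuousLinearEquiv.apply_symm_apply]
  have key0 := hnn (w - w0)
  have expand : ⟪Hf x (w - w0), w - w0⟫
      = ⟪Hf x w, w⟫ + 2 * (μhat⁻¹ * ⟪g, w⟫) + μhat⁻¹ * μhat⁻¹ * S := by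
    rw [map_sub, inner_sub_left, inner_sub_right, inner_sub_right]
    have e1 : ⟪Hf x w, w0⟫ = ⟪Hf x w0, w⟫ := Hsymm w w0
    have e2 : ⟪Hf x w0, w⟫ = -(μhat⁻¹ * ⟪g, w⟫) := by
      rw [hHw0, real_inner_smul_left]; ring
    have e3 : ⟪Hf x w0, w0⟫ = μhat⁻¹ * μhat⁻¹ * S := by
      rw [hHw0, hw0, real_inner_smul_left, real_inner_smul_right, hS,
        real_inner_comm]
      ring
    rw [e1, e2, e3]; ring
  rw [expand] at key0
  have h := hrel xstar x
  rw [hxstar] at h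
  rw [← hw, ← hg] at h
  -- multiply key0 by μhat/2
  have key1 : 0 ≤ μhat / 2 * (⟪Hf x w, w⟫ + 2 * (μhat⁻¹ * ⟪g, w⟫) + μhat⁻¹ * μhat⁻¹ * S) :=
    mul_nonneg (by positivity) key0
  have e4 : μhat / 2 * (⟪Hf x w, w⟫ + 2 * (μhat⁻¹ * ⟪g, w⟫) + μhat⁻¹ * μhat⁻¹ * S)
      = μhat / 2 * ⟪Hf x w, w⟫ + ⟪g, w⟫ + μhat⁻¹ * S / 2 := by
    field_simp
  rw [e4] at key1
  have h5 : f x - fstar ≤ μhat⁻¹ * S / 2 := by linarith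
  have h6 := mul_le_mul_of_nonneg_left h5 hμhat.le
  have e5 : μhat * (μhat⁻¹ * S / 2) = S / 2 := by
    field_simp
  have e6 : μhat * (f x - fstar) = μhat * f x - μhat * fstar := by ring
  rw [e5, e6] at h6
  have e7 : 2 * μhat * (f x - fstar) = 2 * (μhat * f x) - 2 * (μhat * fstar) := by ring
  rw [e7]
  linarith
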